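/- (ISS of a single-layer GGNN) Let x(t+1) = tanh(q̂(t) ∘ (Ax(t)) + q̃(t) ∘ (Bu(t)) + b) with ‖q̂(t)‖_∞ ≤ σ_q̂, ‖q̃(t)‖_∞ ≤ σ_q̃ ≤ 1 for all t, and suppose 𝒜 := σ_q̂‖A‖_∞ < 1 and ‖x(0)‖_∞ ≤ 1, ‖u(t)‖_∞ ≤ ū for all t. Then for all t, ‖x(t)‖_∞ ≤ 𝒜^t‖x(0)‖_∞ + (1-𝒜)^{-1}(σ_q̃‖B‖_∞ ū + ‖b‖_∞). -/

import Mathlib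

attribute [local instance] Matrix.linftyOpNormedAddCommGroup

lemma sinh_le_mul_cosh {y : ℝ} (hy : 0 ≤ y) : Real.sinh y ≤ y * Real.cosh y := by
  have hmono : MonotoneOn (fun t : ℝ => t * Real.cosh t - Real.sinh t) (Set.Ici 0) := by
    apply monotoneOn_of_deriv_nonneg (convex_Ici 0)
    · exact ((continuous_id.mul Real.continuous_cosh).sub Real.continuous_sinh).continuousOn
    · intro t _
      exact (((hasDerivAt_id t).mul (Real.hasDerivAt_cosh t)).sub
        (Real.hasDerivAt_sinh t)).differentiableAt.differentiableWithinAt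
    · intro t ht
      rw [interior_Ici] at ht
      have hd : deriv (fun t : ℝ => t * Real.cosh t - Real.sinh t) t
          = 1 * Real.cosh t + t * Real.sinh t - Real.cosh t :=
        (((hasDerivAt_id t).mul (Real.hasDerivAt_cosh t)).sub (Real.hasDerivAt_sinh t)).deriv
      rw [hd]
      have h1 : 0 ≤ Real.sinh t := Real.sinh_nonneg_iff.2 ht.le
      nlinarith [(Set.mem_Ioi.1 ht).le]
  have := hmono (Set.self_mem_Ici) (Set.mem_Ici.2 hy) hy
  simpa using this

lemma abs_tanh_le (y : ℝ) : |Real.tanh y| ≤ |y| := by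
  have key : ∀ z : ℝ, 0 ≤ z → Real.tanh z ≤ z := by
    intro z hz
    rw [Real.tanh_eq_sinh_div_cosh, div_le_iff₀ (Real.cosh_pos z)]
    exact sinh_le_mul_cosh hz
  have tnn : ∀ z : ℝ, 0 ≤ z → 0 ≤ Real.tanh z := by
    intro z hz
    rw [Real.tanh_eq_sinh_div_cosh]
    exact div_nonneg (Real.sinh_nonneg_iff.2 hz) (Real.cosh_pos z).le
  rcases le_total 0 y with hy | hy
  · rw [abs_of_nonneg (tnn y hy), abs_of_nonneg hy]; exact key y hy
  · have h1 : 0 ≤ -y := by linarith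
    rw [abs_of_nonpos hy]
    have : Real.tanh y = -Real.tanh (-y) := by rw [Real.tanh_neg, neg_neg]
    rw [this, abs_neg, abs_of_nonneg (tnn _ h1)]
    exact key _ h1

theorem ggnn_ISS {n m : ℕ}
    (A : Matrix (Fin n) (Fin n) ℝ) (B : Matrix (Fin n) (Fin m) ℝ) (b : Fin n → ℝ)
    (x : ℕ → Fin n → ℝ) (u : ℕ → Fin m → ℝ)
    (qhat qtil : ℕ → Fin n → ℝ) (σqhat σqtil ubar : ℝ)
    (hqhat₀ : ∀ t i, qhat t i ∈ Set.Icc (0 : ℝ) 1)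
    (hqtil₀ : ∀ t i, qtil t i ∈ Set.Icc (0 : ℝ) 1)
    (hqhat : ∀ t, ‖qhat t‖ ≤ σqhat) (hqtil : ∀ t, ‖qtil t‖ ≤ σqtil)
    (hσqtil : σqtil ≤ 1)
    (hrec : ∀ t, x (t + 1) =
      fun i => Real.tanh (qhat t i * A.mulVec (x t) i + qtil t i * B.mulVec (u t) i + b i))
    (hA : σqhat * ‖A‖ < 1)
    (hx0 : ‖x 0‖ ≤ 1) (hu : ∀ t, ‖u t‖ ≤ ubar) :
    ∀ t, ‖x t‖ ≤ (σqhat * ‖A‖) ^ t * ‖x 0‖ +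
      (1 - σqhat * ‖A‖)⁻¹ * (σqtil * ‖B‖ * ubar + ‖b‖) := by
  set 𝒜 := σqhat * ‖A‖ with h𝒜
  set c := σqtil * ‖B‖ * ubar + ‖b‖ with hc
  have hσqhat : 0 ≤ σqhat := le_trans (norm_nonneg _) (hqhat 0)
  have hσqtil' : 0 ≤ σqtil := le_trans (norm_nonneg _) (hqtil 0)
  have hubar : 0 ≤ ubar := le_trans (norm_nonneg _) (hu 0)
  have h𝒜nn : 0 ≤ 𝒜 := mul_nonneg hσqhat (norm_nonneg _)
  have hcnn : 0 ≤ c := add_nonneg (mul_nonneg (mul_nonneg hσqtil' (norm_nonneg _)) hubar)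
    (norm_nonneg _)
  have h1𝒜 : 0 < 1 - 𝒜 := by linarith
  set S := (1 - 𝒜)⁻¹ * c with hS
  have hSnn : 0 ≤ S := mul_nonneg (inv_nonneg.2 h1𝒜.le) hcnn
  have hcS : c = (1 - 𝒜) * S := by
    rw [hS, ← mul_assoc, mul_inv_cancel₀ h1𝒜.ne', one_mul]
  have hstep : ∀ t, ‖x (t + 1)‖ ≤ 𝒜 * ‖x t‖ + c := by
    intro t
    rw [hrec t]
    have hrhs : 0 ≤ 𝒜 * ‖x t‖ + c := add_nonneg (mul_nonneg h𝒜nn (norm_nonneg _)) hcnn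
    apply (pi_norm_le_iff_of_nonneg hrhs).2
    intro i
    have h1 : |qhat t i| ≤ σqhat := le_trans (norm_le_pi_norm (qhat t) i) (hqhat t)
    have h2 : |qtil t i| ≤ σqtil := le_trans (norm_le_pi_norm (qtil t) i) (hqtil t)
    have h3 : |A.mulVec (x t) i| ≤ ‖A‖ * ‖x t‖ :=
      le_trans (norm_le_pi_norm (A.mulVec (x t)) i) (Matrix.linfty_opNorm_mulVec A (x t))
    have h4 : |B.mulVec (u t) i| ≤ ‖B‖ * ubar := by
      refine le_trans (norm_le_pi_norm (B.mulVec (u t)) i) ?_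
      exact le_trans (Matrix.linfty_opNorm_mulVec B (u t))
        (mul_le_mul_of_nonneg_left (hu t) (norm_nonneg _))
    have h5 : |b i| ≤ ‖b‖ := norm_le_pi_norm b i
    calc ‖Real.tanh (qhat t i * A.mulVec (x t) i + qtil t i * B.mulVec (u t) i + b i)‖
        ≤ |qhat t i * A.mulVec (x t) i + qtil t i * B.mulVec (u t) i + b i| :=
          abs_tanh_le _
      _ ≤ |qhat t i| * |A.mulVec (x t) i| + |qtil t i| * |B.mulVec (u t) i| + |b i| := by
          refine le_trans (abs_add_le _ _) ?_
          gcongr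
          refine le_trans (abs_add_le _ _) ?_
          simp [abs_mul]
      _ ≤ σqhat * (‖A‖ * ‖x t‖) + σqtil * (‖B‖ * ubar) + ‖b‖ := by
          have g1 := mul_le_mul h1 h3 (abs_nonneg _) hσqhat
          have g2 := mul_le_mul h2 h4 (abs_nonneg _) hσqtil'
          linarith
      _ = 𝒜 * ‖x t‖ + c := by rw [h𝒜, hc]; ring
  intro t
  induction t with
  | zero =>
    simp only [pow_zero, one_mul]
    exact le_add_of_nonneg_right hSnn
  | succ t ih =>
    calc ‖x (t + 1)‖ ≤ 𝒜 * ‖x t‖ + c := hstep t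
      _ ≤ 𝒜 * (𝒜 ^ t * ‖x 0‖ + S) + c := by gcongr
      _ = 𝒜 ^ (t + 1) * ‖x 0‖ + (𝒜 * S + (1 - 𝒜) * S) := by rw [← hcS]; ring
      _ = 𝒜 ^ (t + 1) * ‖x 0‖ + S := by ring
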